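/- Let π be the bivector field on P defined by a nondegenerate 2-form Ω. Then π is dΩ-twisted Poisson: (1/2)[π,π] = π♯(dΩ). Equivalently, for f,g,h ∈ C∞(P), {f,{g,h}} + {g,{h,f}} + {h,{f,g}} = -dΩ(π♯(df), π♯(dg), π♯(dh)). -/
import Mathlib


/-- Let `π` be the bivector defined by a nondegenerate 2-form
`Ω` (via `i_X Ω = α ⟺ π♯(α) = -X`, i.e. `Ω♭ ∘ π♯ = -Id`).  Then `π` is
`dΩ`-twisted Poisson; equivalently, for functions `f,g,h`:
`{f,{g,h}} + {g,{h,f}} + {h,{f,g}} = -dΩ(π♯df, π♯dg, π♯dh)`,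
where `{f,g} = π(df,dg) = dg(π♯df)` and `dΩ` is given by the intrinsic
formula.  Functions: commutative ℝ-algebra `A`; vector fields: `A`-module `V`
with bracket `lie` acting by derivations `ρ`; 1-forms: `Module.Dual A V`. -/
theorem stmt11 {A V : Type*} [CommRing A] [Algebra ℝ A]
    [AddCommGroup V] [Module A V]
    (ρ : V → A → A) (lie : V → V → V)
    (hρder : ∀ X (f g : A), ρ X (f * g) = f * ρ X g + ρ X f * g)
    (hlie : ∀ X Y (f : A), ρ (lie X Y) f = ρ X (ρ Y f) - ρ Y (ρ X f))
    (d : A → Module.Dual A V) (hd : ∀ (f : A) (X : V), d f X = ρ X f)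
    (Ω : V →ₗ[A] V →ₗ[A] A)
    (hΩalt : ∀ X Y : V, Ω X Y = - Ω Y X)
    (hΩnd : Function.Bijective (fun X : V => (Ω X : Module.Dual A V)))
    (P : Module.Dual A V →ₗ[A] V)
    (hP : ∀ α : Module.Dual A V, Ω (P α) = - α) :
    ∀ f g h : A,
      d (d h (P (d g))) (P (d f)) + d (d f (P (d h))) (P (d g))
        + d (d g (P (d f))) (P (d h))
      = - (ρ (P (d f)) (Ω (P (d g)) (P (d h)))
           - ρ (P (d g)) (Ω (P (d f)) (P (d h)))
           + ρ (P (d h)) (Ω (P (d f)) (P (d g)))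
           - Ω (lie (P (d f)) (P (d g))) (P (d h))
           + Ω (lie (P (d f)) (P (d h))) (P (d g))
           - Ω (lie (P (d g)) (P (d h))) (P (d f))) := by
  intro f g h
  have hone : ∀ X : V, ρ X 1 = 0 := by
    intro X
    have := hρder X 1 1
    simpa [map_ofNat] using this
  have h2inv : (algebraMap ℝ A) (1/2) * 2 = 1 := by
    have : ((algebraMap ℝ A) (1/2)) * ((algebraMap ℝ A) 2) = 1 := by
      rw [← map_mul]; norm_num
    simpa [map_ofNat] using this
  have hnegone : ∀ X : V, ρ X (-1) = 0 := by
    intro X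
    have t := hρder X (-1) (-1)
    simp at t
    have h1 := hone X
    have h2 : (2:A) * ρ X (-1) = 0 := by linear_combination t - h1
    linear_combination (algebraMap ℝ A) (1/2) * h2 - ρ X (-1) * h2inv
  have hneg : ∀ (X : V) (x : A), ρ X (-x) = - ρ X x := by
    intro X x
    have t := hρder X (-1) x
    simp [hnegone X] at t
    linear_combination t
  have e1 : ∀ (a : A) (Y : V), Ω Y (P (d a)) = ρ Y a := by
    intro a Y
    rw [hΩalt, hP]
    simp [hd]
  have e2 : ∀ (a : A) (Y : V), Ω (P (d a)) Y = - ρ Y a := by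
    intro a Y
    rw [hP]
    simp [hd]
  have key : ∀ a b : A, ρ (P (d a)) b = - ρ (P (d b)) a := by
    intro a b
    exact (e1 b (P (d a))).symm.trans (e2 a (P (d b)))
  simp only [hd]
  rw [e1 h (P (d g)), e1 h (P (d f)), e1 g (P (d f)),
      e1 h (lie (P (d f)) (P (d g))), e1 g (lie (P (d f)) (P (d h))),
      e1 f (lie (P (d g)) (P (d h))),
      hlie, hlie, hlie]
  have c1 : ρ (P (d f)) (ρ (P (d g)) h) = - ρ (P (d f)) (ρ (P (d h)) g) := by
    rw [key g h, hneg]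
  have c2 : ρ (P (d h)) (ρ (P (d f)) g) = - ρ (P (d h)) (ρ (P (d g)) f) := by
    rw [key f g, hneg]
  linear_combination c1 + c2
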